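/- Let X = ℝⁿ or X = [0,∞)ⁿ, and let γ_p : ℝⁿ → ℝ be continuous. Suppose the strict epistemic pooling principle holds for Hadamard (componentwise product) pooling for all e, f ∈ X, i.e., γ_p(e ⊙ f) > 0 ↔ (γ_p(e) > 0 ∨ γ_p(f) > 0). Then either γ_p(e) ≤ 0 for every e ∈ X, or γ_p(e) > 0 for every e ∈ X. -/
import Mathlib


/-- If γ_p is continuous and the strict epistemic pooling principle holds
for Hadamard pooling on X = ℝⁿ or X = [0,∞)ⁿ, then either Pos_p = ∅ or Neg_p = ∅,
i.e. γ_p(e) ≤ 0 for all e ∈ X or γ_p(e) > 0 for all e ∈ X. -/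
theorem had_pooling_strict_continuous_trivial (n : ℕ) (X : Set (Fin n → ℝ))
    (hX : X = Set.univ ∨ X = {x : Fin n → ℝ | ∀ i, 0 ≤ x i})
    (γ : (Fin n → ℝ) → ℝ) (hcont : Continuous γ)
    (hpool : ∀ e ∈ X, ∀ f ∈ X,
      γ (fun i => e i * f i) > 0 ↔ (γ e > 0 ∨ γ f > 0)) :
    (∀ e ∈ X, γ e ≤ 0) ∨ (∀ e ∈ X, γ e > 0) := by
  by_contra h
  push_neg at h
  obtain ⟨⟨e, he, hee⟩, ⟨f, hf, hff⟩⟩ := h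
  have hmemX : ∀ x : Fin n → ℝ, (∀ i, 0 ≤ x i) → x ∈ X := by
    rcases hX with h | h <;> simp [h]
  have h0 : (0 : Fin n → ℝ) ∈ X := hmemX 0 (fun i => le_refl 0)
  have hγ0 : γ (fun _ : Fin n => (0 : ℝ)) > 0 := by
    have := (hpool e he 0 h0).mpr (Or.inl hee)
    simpa using this
  have key : ∀ t : ℝ, 0 < t → γ (fun _ : Fin n => t) ≤ 0 := by
    intro t ht
    by_contra hpos
    push_neg at hpos
    have hct : (fun _ : Fin n => t) ∈ X := hmemX _ (fun i => le_of_lt ht)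
    have hft : (fun i => f i / t) ∈ X := by
      rcases hX with h | h
      · simp [h]
      · rw [h] at hf ⊢
        intro i
        exact div_nonneg (hf i) ht.le
    have hgt := (hpool _ hct _ hft).mpr (Or.inl hpos)
    have heq : (fun i => (fun _ : Fin n => t) i * (fun i => f i / t) i) = f := by
      funext i
      field_simp
    rw [heq] at hgt
    exact absurd hgt (not_lt.mpr hff)
  have hc : Continuous (fun t : ℝ => γ (fun _ : Fin n => t)) :=
    hcont.comp (continuous_pi fun _ => continuous_id)
  have htend : Filter.Tendsto (fun k : ℕ => γ (fun _ : Fin n => 1 / ((k : ℝ) + 1)))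
      Filter.atTop (nhds (γ (fun _ : Fin n => (0 : ℝ)))) :=
    (hc.continuousAt.tendsto).comp tendsto_one_div_add_atTop_nhds_zero_nat
  have hle : γ (fun _ : Fin n => (0 : ℝ)) ≤ 0 :=
    le_of_tendsto htend (Filter.Eventually.of_forall fun k => key _ (by positivity))
  exact absurd hγ0 (not_lt.mpr hle)
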